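/- Let n ≥ 1, k ≥ 2, and f : 𝔽_{2^n} → ℤ/2^kℤ. Define g : 𝔽_{2^n} → ℤ/2^kℤ by g(x) = f(x) + 2^{k−2}·ι(Tr(x)) + 2^{k−1}·ι(σ(1,x)). Then f is nega-ℤ_{2^k}-bent if and only if g is ℤ_{2^k}-bent. -/

import Mathlib

noncomputable section

/-- The absolute trace Tr(x) = x + x² + x⁴ + … + x^{2^{n−1}}. -/
def Tr {F : Type} [Field F] (n : ℕ) (x : F) : F :=
  ∑ i ∈ Finset.range n, x ^ (2 ^ i)

/-- σ(c,x) = Σ_{0 ≤ i < j ≤ n−1} (cx)^{2^i} (cx)^{2^j} -/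
def sig {F : Type} [Field F] (n : ℕ) (c x : F) : F :=
  ∑ j ∈ Finset.range n, ∑ i ∈ Finset.range j, (c * x) ^ (2 ^ i) * (c * x) ^ (2 ^ j)

/-- ι(e): the integer lift of e ∈ {0,1} ⊆ F. -/
def iotaN {F : Type} [Field F] [DecidableEq F] (e : F) : ℕ :=
  if e = 1 then 1 else 0

/-- ι(e) viewed in ℤ/2^kℤ. -/
def iotaZ {F : Type} [Field F] [DecidableEq F] (k : ℕ) (e : F) : ZMod (2 ^ k) :=
  if e = 1 then 1 else 0

/-- ζ = e^{2πi/2^k}. -/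
def zeta (k : ℕ) : ℂ := Complex.exp (2 * Real.pi * Complex.I / 2 ^ k)

/-- c₀ ∈ {0,1} ⊆ F equals 1 if c is odd and 0 if c is even. -/
def czero {F : Type} [Field F] (k : ℕ) (c : ZMod (2 ^ k)) : F :=
  if c.val % 2 = 1 then 1 else 0

/-- The generalized Walsh–Hadamard transform
H_f(c,u) = Σ_{x ∈ F} ζ^{c·f(x)} (−1)^{ι(Tr(ux))}. -/
def gWH {F : Type} [Field F] [Fintype F] [DecidableEq F] (n k : ℕ)
    (f : F → ZMod (2 ^ k)) (c : ZMod (2 ^ k)) (u : F) : ℂ :=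
  ∑ x : F, zeta k ^ (c * f x).val * (-1 : ℂ) ^ (iotaN (Tr n (u * x)))

/-- The nega-ℤ_{2^k}-Hadamard transform
K_f(c,u) = Σ_{x ∈ F} (−1)^{ι(Tr(ux)) + ι(σ(c₀,x))} ζ^{c·f(x)} i^{ι(Tr(c₀x))}. -/
def negaK {F : Type} [Field F] [Fintype F] [DecidableEq F] (n k : ℕ)
    (f : F → ZMod (2 ^ k)) (c : ZMod (2 ^ k)) (u : F) : ℂ :=
  ∑ x : F, (-1 : ℂ) ^ (iotaN (Tr n (u * x)) + iotaN (sig n (czero k c) x)) *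
    zeta k ^ (c * f x).val * Complex.I ^ (iotaN (Tr n (czero k c * x)))

-- ===== auxiliary lemmas =====

lemma zeta_pow_full (k : ℕ) : zeta k ^ (2^k : ℕ) = 1 := by
  rw [zeta, ← Complex.exp_nat_mul]
  rw [show ((2^k : ℕ) : ℂ) * (2 * Real.pi * Complex.I / 2 ^ k) = 2 * Real.pi * Complex.I by
    push_cast; field_simp]
  exact Complex.exp_two_pi_mul_I

lemma zeta_pow_half (k : ℕ) (hk : 1 ≤ k) : zeta k ^ (2^(k-1) : ℕ) = -1 := by
  rw [zeta, ← Complex.exp_nat_mul]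
  rw [show ((2^(k-1) : ℕ) : ℂ) * (2 * Real.pi * Complex.I / 2 ^ k) = Real.pi * Complex.I by
    push_cast
    rw [show (2:ℂ)^k = 2^(k-1) * 2 by rw [← pow_succ]; congr 1; omega]
    have h2 : ((2:ℂ))^(k-1) ≠ 0 := pow_ne_zero _ two_ne_zero
    field_simp]
  exact Complex.exp_pi_mul_I

lemma zeta_pow_quarter (k : ℕ) (hk : 2 ≤ k) : zeta k ^ (2^(k-2) : ℕ) = Complex.I := by
  rw [zeta, ← Complex.exp_nat_mul]
  rw [show ((2^(k-2) : ℕ) : ℂ) * (2 * Real.pi * Complex.I / 2 ^ k) = (Real.pi/2) * Complex.I by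
    push_cast
    rw [show (2:ℂ)^k = 2^(k-2) * 4 by rw [show k = (k-2)+2 by omega]; rw [pow_add]; norm_num]
    have h2 : ((2:ℂ))^(k-2) ≠ 0 := pow_ne_zero _ two_ne_zero
    field_simp
    ring]
  rw [Complex.exp_mul_I]
  rw [show ((Real.pi:ℂ)/2) = ((Real.pi/2 : ℝ) : ℂ) by push_cast; ring]
  rw [← Complex.ofReal_cos, ← Complex.ofReal_sin, Real.cos_pi_div_two, Real.sin_pi_div_two]
  simp

lemma zeta_pow_mod (k m : ℕ) : zeta k ^ m = zeta k ^ (m % 2^k) := by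
  conv_lhs => rw [← Nat.div_add_mod m (2^k)]
  rw [pow_add, pow_mul, zeta_pow_full, one_pow, one_mul]

lemma charF {F : Type} [Field F] [Fintype F] (n : ℕ) (hF : Fintype.card F = 2 ^ n) :
    CharP F 2 := by
  have hc : ((2^n : ℕ) : F) = 0 := by rw [← hF]; exact FiniteField.cast_card_eq_zero F
  have hdvd : ringChar F ∣ 2^n := (ringChar.dvd hc)
  have hp : (ringChar F).Prime := CharP.char_is_prime F (ringChar F)
  have h2 : ringChar F = 2 :=
    (Nat.prime_dvd_prime_iff_eq hp Nat.prime_two).mp (hp.dvd_of_dvd_pow hdvd)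
  exact h2 ▸ ringChar.charP F

lemma Tr_add {F : Type} [Field F] [CharP F 2] (n : ℕ) (a b : F) :
    Tr n (a + b) = Tr n a + Tr n b := by
  haveI : Fact (Nat.Prime 2) := ⟨Nat.prime_two⟩
  unfold Tr
  rw [← Finset.sum_add_distrib]
  exact Finset.sum_congr rfl fun i _ => add_pow_char_pow a b 2 i

lemma Tr_zero {F : Type} [Field F] (n : ℕ) : Tr n (0:F) = 0 := by
  unfold Tr
  exact Finset.sum_eq_zero fun i _ => zero_pow (by positivity)

lemma sig_zero {F : Type} [Field F] (n : ℕ) (x : F) : sig n (0:F) x = 0 := by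
  unfold sig
  refine Finset.sum_eq_zero fun j _ => Finset.sum_eq_zero fun i _ => ?_
  rw [zero_mul, zero_pow (by positivity), zero_mul]

lemma Tr_sq {F : Type} [Field F] [Fintype F] [CharP F 2] (n : ℕ)
    (hF : Fintype.card F = 2 ^ n) (x : F) : Tr n x ^ 2 = Tr n x := by
  haveI : Fact (Nat.Prime 2) := ⟨Nat.prime_two⟩
  have hpc : x ^ (2^n) = x := by rw [← hF]; exact FiniteField.pow_card x
  have h1 : Tr n x ^ 2 = ∑ i ∈ Finset.range n, x ^ 2 ^ (i+1) := by
    rw [Tr, sum_pow_char]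
    exact Finset.sum_congr rfl fun i _ => by rw [← pow_mul, ← pow_succ]
  have h := Finset.sum_range_succ' (fun i => x ^ 2 ^ i) n
  rw [Finset.sum_range_succ (fun i => x ^ 2 ^ i) n] at h
  simp only [hpc] at h
  norm_num at h
  rw [h1, Tr]
  exact h.symm

lemma Tr_mem {F : Type} [Field F] [Fintype F] [CharP F 2] (n : ℕ)
    (hF : Fintype.card F = 2 ^ n) (x : F) : Tr n x = 0 ∨ Tr n x = 1 := by
  have h := Tr_sq n hF x
  have h2 : Tr n x * (Tr n x - 1) = 0 := by ring_nf; linear_combination h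
  rcases mul_eq_zero.mp h2 with h3 | h3
  · exact Or.inl h3
  · exact Or.inr (by linear_combination h3)

/-- With g(x) = f(x) + 2^{k−2}·ι(Tr(x)) + 2^{k−1}·ι(σ(1,x)),
f is nega-ℤ_{2^k}-bent iff g is ℤ_{2^k}-bent. -/
theorem stmt11 {F : Type} [Field F] [Fintype F] [DecidableEq F] (n k : ℕ)
    (hn : 1 ≤ n) (hk : 2 ≤ k) (hF : Fintype.card F = 2 ^ n)
    (f : F → ZMod (2 ^ k)) (g : F → ZMod (2 ^ k))
    (hg : ∀ x, g x = f x + 2 ^ (k - 2) * iotaZ k (Tr n x) +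
      2 ^ (k - 1) * iotaZ k (sig n 1 x)) :
    (∀ u : F, ∀ c : ZMod (2 ^ k), c ≠ 0 →
        ‖negaK n k f c u‖ = Real.sqrt (2 ^ n)) ↔
      (∀ u : F, ∀ c : ZMod (2 ^ k), c ≠ 0 →
        ‖gWH n k g c u‖ = Real.sqrt (2 ^ n)) := by
  haveI hNZ : NeZero (2^k) := ⟨by positivity⟩
  haveI hch : CharP F 2 := charF n hF
  have hmod2 : ∀ v : ℕ, v % 2 = v % 4 % 2 := fun v => (Nat.mod_mod_of_dvd v (by norm_num)).symm
  have hI4 : (Complex.I)^(4:ℕ) = 1 := by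
    rw [show (4:ℕ) = 2*2 from rfl, pow_mul, Complex.I_sq]; norm_num
  have hImod : ∀ v : ℕ, Complex.I ^ v = Complex.I ^ (v % 4) := by
    intro v
    conv_lhs => rw [← Nat.div_add_mod v 4]
    rw [pow_add, pow_mul, hI4, one_pow, one_mul]
  have hNmod : ∀ v : ℕ, (-1:ℂ) ^ v = (-1:ℂ) ^ (v % 2) := by
    intro v
    conv_lhs => rw [← Nat.div_add_mod v 2]
    rw [pow_add, pow_mul, neg_one_sq, one_pow, one_mul]
  have hEadd : ∀ a b : ZMod (2^k), zeta k ^ (a + b).val = zeta k ^ a.val * zeta k ^ b.val := by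
    intro a b
    rw [ZMod.val_add, ← zeta_pow_mod, pow_add]
  have hEnat : ∀ m : ℕ, zeta k ^ ((m : ZMod (2^k))).val = zeta k ^ m := by
    intro m; rw [ZMod.val_natCast, ← zeta_pow_mod]
  have hiotaZ : ∀ e : F, iotaZ k e = ((iotaN e : ℕ) : ZMod (2^k)) := by
    intro e; unfold iotaZ iotaN; split <;> simp
  have h11 : (1:F) + 1 = 0 := CharTwo.add_self_eq_zero 1
  have key : ∀ (c : ZMod (2^k)) (u : F),
      gWH n k g c u = negaK n k f c (u + (if 2 ≤ c.val % 4 then (1:F) else 0)) := by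
    intro c u
    have hc2 : ((c.val : ℕ) : ZMod (2^k)) = c := ZMod.natCast_rightInverse c
    have lhs_eq : ∀ x : F, zeta k ^ (c * g x).val =
        zeta k ^ (c * f x).val * Complex.I ^ (c.val * iotaN (Tr n x)) *
          (-1 : ℂ) ^ (c.val * iotaN (sig n 1 x)) := by
      intro x
      have hP : c * (2^(k-2) * iotaZ k (Tr n x))
          = ((c.val * (2^(k-2) * iotaN (Tr n x)) : ℕ) : ZMod (2^k)) := by
        rw [hiotaZ]; conv_lhs => rw [← hc2]
        push_cast; ring
      have hQ : c * (2^(k-1) * iotaZ k (sig n 1 x))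
          = ((c.val * (2^(k-1) * iotaN (sig n 1 x)) : ℕ) : ZMod (2^k)) := by
        rw [hiotaZ]; conv_lhs => rw [← hc2]
        push_cast; ring
      rw [hg x, mul_add, mul_add, hEadd, hEadd, hP, hQ, hEnat, hEnat]
      rw [show c.val * (2^(k-2) * iotaN (Tr n x))
            = 2^(k-2) * (c.val * iotaN (Tr n x)) by ring,
          show c.val * (2^(k-1) * iotaN (sig n 1 x))
            = 2^(k-1) * (c.val * iotaN (sig n 1 x)) by ring,
          pow_mul (zeta k) (2^(k-2)), pow_mul (zeta k) (2^(k-1)),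
          zeta_pow_quarter k hk, zeta_pow_half k (by omega)]
    unfold gWH negaK
    refine Finset.sum_congr rfl fun x _ => ?_
    rw [lhs_eq x]
    have h4 : c.val % 4 = 0 ∨ c.val % 4 = 1 ∨ c.val % 4 = 2 ∨ c.val % 4 = 3 := by omega
    rcases h4 with hr | hr | hr | hr
    · -- r = 0
      have hcv2 : c.val % 2 = 0 := by have := hmod2 c.val; omega
      have hcz : czero k c = (0:F) := by unfold czero; rw [if_neg (by omega)]
      have hε : (if 2 ≤ c.val % 4 then (1:F) else 0) = 0 := if_neg (by omega)
      have hIc : ∀ t : ℕ, Complex.I ^ (c.val * t) = 1 := by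
        intro t; rw [hImod, Nat.mul_mod, hr, Nat.zero_mul, Nat.zero_mod, pow_zero]
      have hNc : ∀ s : ℕ, (-1:ℂ) ^ (c.val * s) = 1 := by
        intro s; rw [hNmod, Nat.mul_mod, hcv2, Nat.zero_mul, Nat.zero_mod, pow_zero]
      rw [hε, add_zero, hcz, sig_zero, zero_mul, Tr_zero, hIc, hNc]
      simp [iotaN]
    · -- r = 1
      have hcv2 : c.val % 2 = 1 := by have := hmod2 c.val; omega
      have hcz : czero k c = (1:F) := by unfold czero; rw [if_pos hcv2]
      have hε : (if 2 ≤ c.val % 4 then (1:F) else 0) = 0 := if_neg (by omega)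
      have hIc : Complex.I ^ (c.val) = Complex.I := by rw [hImod, hr, pow_one]
      have hNc : (-1:ℂ) ^ (c.val) = -1 := by rw [hNmod, hcv2, pow_one]
      rw [hε, add_zero, hcz, one_mul]
      rcases Tr_mem n hF (u*x) with h1 | h1 <;> rcases Tr_mem n hF x with h2 | h2 <;>
        by_cases hs : sig n 1 x = 1 <;>
        simp [iotaN, h1, h2, hs, hIc, hNc, pow_add, pow_succ] <;> ring
    · -- r = 2
      have hcv2 : c.val % 2 = 0 := by have := hmod2 c.val; omega
      have hcz : czero k c = (0:F) := by unfold czero; rw [if_neg (by omega)]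
      have hε : (if 2 ≤ c.val % 4 then (1:F) else 0) = 1 := if_pos (by omega)
      have hIc : Complex.I ^ (c.val) = -1 := by rw [hImod, hr, Complex.I_sq]
      have hNc : ∀ s : ℕ, (-1:ℂ) ^ (c.val * s) = 1 := by
        intro s; rw [hNmod, Nat.mul_mod, hcv2, Nat.zero_mul, Nat.zero_mod, pow_zero]
      rw [hε, hcz, sig_zero, zero_mul, Tr_zero, hNc]
      rw [show (u+1)*x = u*x + x by ring, Tr_add]
      rcases Tr_mem n hF (u*x) with h1 | h1 <;> rcases Tr_mem n hF x with h2 | h2 <;>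
        simp [iotaN, h1, h2, h11, hIc, pow_add, pow_succ] <;> ring
    · -- r = 3
      have hcv2 : c.val % 2 = 1 := by have := hmod2 c.val; omega
      have hcz : czero k c = (1:F) := by unfold czero; rw [if_pos hcv2]
      have hε : (if 2 ≤ c.val % 4 then (1:F) else 0) = 1 := if_pos (by omega)
      have hIc : Complex.I ^ (c.val) = -Complex.I := by
        rw [hImod, hr, pow_succ, Complex.I_sq]; ring
      have hNc : (-1:ℂ) ^ (c.val) = -1 := by rw [hNmod, hcv2, pow_one]
      rw [hε, hcz, one_mul]
      rw [show (u+1)*x = u*x + x by ring, Tr_add]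
      rcases Tr_mem n hF (u*x) with h1 | h1 <;> rcases Tr_mem n hF x with h2 | h2 <;>
        by_cases hs : sig n 1 x = 1 <;>
        simp [iotaN, h1, h2, hs, h11, hIc, hNc, pow_add, pow_succ] <;> ring
  constructor
  · intro H u c hc
    rw [key c u]
    exact H _ c hc
  · intro H u c hc
    have h2 := key c (u + (if 2 ≤ c.val % 4 then (1:F) else 0))
    rw [add_assoc, CharTwo.add_self_eq_zero, add_zero] at h2
    rw [← h2]
    exact H _ c hc
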